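/- Let V > 0 and β > 0 with βV ≤ 2, and define k(x) := x·sinh(βx) − V·tanh(βV)·cosh(βx) and φ(t) := k(√t) for t > 0. Then k''(x) > 0 for all x > 0 and φ is strictly convex on (0,∞); moreover k(V) = 0. -/

import Mathlib

open Real Set

lemma aux_G {u : ℝ} (hu : 0 < u) : Real.sinh u < u * Real.cosh u := by
  have key : StrictMonoOn (fun y : ℝ => y * Real.cosh y - Real.sinh y) (Ici 0) := by
    apply strictMonoOn_of_deriv_pos (convex_Ici 0)
    · fun_prop
    · intro y hy
      rw [interior_Ici, mem_Ioi] at hy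
      have h : HasDerivAt (fun y : ℝ => y * Real.cosh y - Real.sinh y)
          (1 * Real.cosh y + y * Real.sinh y - Real.cosh y) y :=
        ((hasDerivAt_id y).mul (Real.hasDerivAt_cosh y)).sub (Real.hasDerivAt_sinh y)
      rw [h.deriv]
      nlinarith [Real.sinh_pos_iff.2 hy]
  have := key (self_mem_Ici) (le_of_lt hu) hu
  simpa using this

lemma aux_F {u : ℝ} (hu : 0 < u) : u * Real.cosh u < (1 + u ^ 2) * Real.sinh u := by
  have key : StrictMonoOn (fun y : ℝ => (1 + y ^ 2) * Real.sinh y - y * Real.cosh y) (Ici 0) := by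
    apply strictMonoOn_of_deriv_pos (convex_Ici 0)
    · fun_prop
    · intro y hy
      rw [interior_Ici, mem_Ioi] at hy
      have h : HasDerivAt (fun y : ℝ => (1 + y ^ 2) * Real.sinh y - y * Real.cosh y)
          ((0 + 2 * y ^ 1) * Real.sinh y + (1 + y ^ 2) * Real.cosh y -
            (1 * Real.cosh y + y * Real.sinh y)) y := by
        exact (((hasDerivAt_const y (1:ℝ)).add ((hasDerivAt_pow 2 y))).mul
          (Real.hasDerivAt_sinh y)).sub ((hasDerivAt_id y).mul (Real.hasDerivAt_cosh y))
      rw [h.deriv]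
      have := Real.sinh_pos_iff.2 hy
      have := Real.cosh_pos (x := y)
      nlinarith
  have := key (self_mem_Ici) (le_of_lt hu) hu
  simpa using this

theorem comparison_function_convex
    (V β : ℝ) (hV : 0 < V) (hβ : 0 < β) (hβV : β * V ≤ 2) :
    (∀ x > (0 : ℝ),
      0 < deriv (deriv fun y : ℝ =>
        y * Real.sinh (β * y) - V * Real.tanh (β * V) * Real.cosh (β * y)) x) ∧
    StrictConvexOn ℝ (Set.Ioi (0 : ℝ)) (fun t : ℝ =>
      Real.sqrt t * Real.sinh (β * Real.sqrt t) -
        V * Real.tanh (β * V) * Real.cosh (β * Real.sqrt t)) ∧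
    V * Real.sinh (β * V) - V * Real.tanh (β * V) * Real.cosh (β * V) = 0 := by
  set c : ℝ := V * Real.tanh (β * V) with hc_def
  have hβV0 : 0 < β * V := mul_pos hβ hV
  have htanh_pos : 0 < Real.tanh (β * V) := by
    rw [Real.tanh_eq_sinh_div_cosh]
    exact div_pos (Real.sinh_pos_iff.2 hβV0) (Real.cosh_pos _)
  have htanh_lt : Real.tanh (β * V) < 1 := by
    rw [Real.tanh_eq_sinh_div_cosh]
    rw [div_lt_one (Real.cosh_pos _)]
    exact Real.sinh_lt_cosh _
  have hcβ : c * β < 2 := by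
    have : c * β = (β * V) * Real.tanh (β * V) := by rw [hc_def]; ring
    rw [this]
    calc (β * V) * Real.tanh (β * V) < (β * V) * 1 := by
          exact mul_lt_mul_of_pos_left htanh_lt hβV0
      _ ≤ 2 := by linarith
  -- derivatives of k
  have hk1 : ∀ y : ℝ, HasDerivAt (fun y : ℝ =>
      y * Real.sinh (β * y) - c * Real.cosh (β * y))
      (1 * Real.sinh (β * y) + y * (Real.cosh (β * y) * β) -
        c * (Real.sinh (β * y) * β)) y := by
    intro y
    have h1 : HasDerivAt (fun y : ℝ => β * y) β y := by
      simpa using (hasDerivAt_id y).const_mul β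
    have hs : HasDerivAt (fun y : ℝ => Real.sinh (β * y)) (Real.cosh (β * y) * β) y :=
      (Real.hasDerivAt_sinh (β * y)).comp y h1
    have hch : HasDerivAt (fun y : ℝ => Real.cosh (β * y)) (Real.sinh (β * y) * β) y :=
      (Real.hasDerivAt_cosh (β * y)).comp y h1
    exact ((hasDerivAt_id y).mul hs).sub (hch.const_mul c)
  have hderiv_k : (deriv fun y : ℝ =>
      y * Real.sinh (β * y) - c * Real.cosh (β * y)) = fun y : ℝ =>
      1 * Real.sinh (β * y) + y * (Real.cosh (β * y) * β) -
        c * (Real.sinh (β * y) * β) :=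
    funext fun y => (hk1 y).deriv
  have hk2 : ∀ x : ℝ, HasDerivAt (fun y : ℝ =>
      1 * Real.sinh (β * y) + y * (Real.cosh (β * y) * β) -
        c * (Real.sinh (β * y) * β))
      (1 * (Real.cosh (β * x) * β) +
        (1 * (Real.cosh (β * x) * β) + x * ((Real.sinh (β * x) * β) * β)) -
        c * ((Real.cosh (β * x) * β) * β)) x := by
    intro x
    have h1 : HasDerivAt (fun y : ℝ => β * y) β x := by
      simpa using (hasDerivAt_id x).const_mul β
    have hs : HasDerivAt (fun y : ℝ => Real.sinh (β * y)) (Real.cosh (β * x) * β) x :=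
      (Real.hasDerivAt_sinh (β * x)).comp x h1
    have hch : HasDerivAt (fun y : ℝ => Real.cosh (β * y)) (Real.sinh (β * x) * β) x :=
      (Real.hasDerivAt_cosh (β * x)).comp x h1
    exact ((hs.const_mul (1:ℝ)).add ((hasDerivAt_id x).mul (hch.mul_const β))).sub
      ((hs.mul_const β).const_mul c)
  refine ⟨?_, ?_, ?_⟩
  · -- k'' > 0
    intro x hx
    rw [hderiv_k, (hk2 x).deriv]
    have hch := Real.cosh_pos (x := β * x)
    have hsh := Real.sinh_pos_iff.2 (mul_pos hβ hx)
    nlinarith [mul_pos (mul_pos hβ hch) (by linarith : (0:ℝ) < 2 - c * β),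
      mul_pos (mul_pos (mul_pos hβ hβ) hx) hsh]
  · -- strict convexity of φ
    apply strictConvexOn_of_deriv2_pos (convex_Ioi 0)
    · fun_prop
    · intro t ht
      rw [interior_Ioi, mem_Ioi] at ht
      have hst : 0 < Real.sqrt t := Real.sqrt_pos.2 ht
      have hst' : Real.sqrt t ≠ 0 := hst.ne'
      set φ1 : ℝ → ℝ := fun t =>
        ((1 - c * β) / 2) * (Real.sinh (β * Real.sqrt t) / Real.sqrt t) +
          (β / 2) * Real.cosh (β * Real.sqrt t) with hφ1_def
      have hderiv_φ : ∀ s ∈ Ioi (0:ℝ), HasDerivAt (fun t : ℝ =>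
          Real.sqrt t * Real.sinh (β * Real.sqrt t) -
            c * Real.cosh (β * Real.sqrt t)) (φ1 s) s := by
        intro s hs
        rw [mem_Ioi] at hs
        have hss : 0 < Real.sqrt s := Real.sqrt_pos.2 hs
        have hsq : HasDerivAt Real.sqrt (1 / (2 * Real.sqrt s)) s :=
          Real.hasDerivAt_sqrt hs.ne'
        have h1 : HasDerivAt (fun t : ℝ => β * Real.sqrt t)
            (β * (1 / (2 * Real.sqrt s))) s := hsq.const_mul β
        have hsh : HasDerivAt (fun t : ℝ => Real.sinh (β * Real.sqrt t))
            (Real.cosh (β * Real.sqrt s) * (β * (1 / (2 * Real.sqrt s)))) s :=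
          (Real.hasDerivAt_sinh _).comp s h1
        have hch : HasDerivAt (fun t : ℝ => Real.cosh (β * Real.sqrt t))
            (Real.sinh (β * Real.sqrt s) * (β * (1 / (2 * Real.sqrt s)))) s :=
          (Real.hasDerivAt_cosh _).comp s h1
        have hD := (hsq.mul hsh).sub (hch.const_mul c)
        have heq : 1 / (2 * Real.sqrt s) * Real.sinh (β * Real.sqrt s) +
            Real.sqrt s * (Real.cosh (β * Real.sqrt s) * (β * (1 / (2 * Real.sqrt s)))) -
            c * (Real.sinh (β * Real.sqrt s) * (β * (1 / (2 * Real.sqrt s)))) = φ1 s := by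
          rw [hφ1_def]
          field_simp
          ring
        rw [heq] at hD
        exact hD
      have heqOn : Set.EqOn (deriv fun t : ℝ =>
          Real.sqrt t * Real.sinh (β * Real.sqrt t) -
            c * Real.cosh (β * Real.sqrt t)) φ1 (Ioi 0) :=
        fun s hs => (hderiv_φ s hs).deriv
      have hev : (deriv fun t : ℝ =>
          Real.sqrt t * Real.sinh (β * Real.sqrt t) -
            c * Real.cosh (β * Real.sqrt t)) =ᶠ[nhds t] φ1 :=
        Filter.eventuallyEq_of_mem (Ioi_mem_nhds ht) heqOn
      have hit : deriv^[2] (fun t : ℝ =>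
          Real.sqrt t * Real.sinh (β * Real.sqrt t) -
            c * Real.cosh (β * Real.sqrt t)) t = deriv φ1 t := by
        simp only [Function.iterate_succ, Function.iterate_zero, Function.comp_apply, id]
        exact hev.deriv_eq
      rw [hit]
      -- second derivative computation
      have hsq : HasDerivAt Real.sqrt (1 / (2 * Real.sqrt t)) t :=
        Real.hasDerivAt_sqrt ht.ne'
      have h1 : HasDerivAt (fun t : ℝ => β * Real.sqrt t)
          (β * (1 / (2 * Real.sqrt t))) t := hsq.const_mul β
      have hsh : HasDerivAt (fun t : ℝ => Real.sinh (β * Real.sqrt t))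
          (Real.cosh (β * Real.sqrt t) * (β * (1 / (2 * Real.sqrt t)))) t :=
        (Real.hasDerivAt_sinh _).comp t h1
      have hch : HasDerivAt (fun t : ℝ => Real.cosh (β * Real.sqrt t))
          (Real.sinh (β * Real.sqrt t) * (β * (1 / (2 * Real.sqrt t)))) t :=
        (Real.hasDerivAt_cosh _).comp t h1
      have hdiv : HasDerivAt (fun t : ℝ => Real.sinh (β * Real.sqrt t) / Real.sqrt t)
          ((Real.cosh (β * Real.sqrt t) * (β * (1 / (2 * Real.sqrt t))) * Real.sqrt t -
            Real.sinh (β * Real.sqrt t) * (1 / (2 * Real.sqrt t))) / (Real.sqrt t) ^ 2) t :=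
        hsh.div hsq hst'
      have hφ2 : HasDerivAt φ1
          (((1 - c * β) / 2) *
            ((Real.cosh (β * Real.sqrt t) * (β * (1 / (2 * Real.sqrt t))) * Real.sqrt t -
              Real.sinh (β * Real.sqrt t) * (1 / (2 * Real.sqrt t))) / (Real.sqrt t) ^ 2) +
            (β / 2) * (Real.sinh (β * Real.sqrt t) * (β * (1 / (2 * Real.sqrt t))))) t :=
        (hdiv.const_mul _).add (hch.const_mul _)
      rw [hφ2.deriv]
      -- positivity
      set s := Real.sqrt t
      set u := β * s with hu_def
      have hu : 0 < u := mul_pos hβ hst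
      have hshu := Real.sinh_pos_iff.2 hu
      have hchu := Real.cosh_pos (x := u)
      have hG := aux_G hu
      have hF := aux_F hu
      have hN : 0 < (1 - c * β) * (u * Real.cosh u - Real.sinh u) + u ^ 2 * Real.sinh u := by
        nlinarith [mul_lt_mul_of_pos_right hcβ (by linarith : (0:ℝ) < u * Real.cosh u - Real.sinh u)]
      have hEq : ((1 - c * β) / 2) *
            ((Real.cosh u * (β * (1 / (2 * s))) * s -
              Real.sinh u * (1 / (2 * s))) / s ^ 2) +
            (β / 2) * (Real.sinh u * (β * (1 / (2 * s)))) =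
          ((1 - c * β) * (u * Real.cosh u - Real.sinh u) + u ^ 2 * Real.sinh u) / (4 * s ^ 3) := by
        rw [hu_def]
        field_simp
        ring
      rw [hEq]
      exact div_pos hN (by positivity)
  · -- k(V) = 0
    rw [hc_def, Real.tanh_eq_sinh_div_cosh]
    field_simp
    ring
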